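/- arXiv:1905.06485 — 2 statements merged into one kernel-verified Lean document; each statement's English description precedes it below -/
import Mathlib

section
/- Asymptotic localization of the free boundary in dimension two: Let c > 0 and let u be a viscosity solution of min{−(1/2)Δu + c, u − g} = 0 on ℝ² with at most linear growth, where g(x₁, x₂) = max{x₁, x₂, 0}, and suppose in addition that u(x₁, x₂) ≤ max{x₁, 0} + max{x₂, 0} + 1/(4c) for all (x₁, x₂). Then: (i) for every ε ∈ (0, c) and every (x₁, x₂) with (x₁ + x₂)/√2 ≥ 1/(2√(cε)) and |x₁ − x₂| ≥ 1/(2(c − ε)), one has u(x₁, x₂) = g(x₁, x₂); (ii) for every (x₁, x₂) with x₁ + x₂ ≥ 0 and |x₁ − x₂| < 1/(2c), one has u(x₁, x₂) > g(x₁, x₂). Consequently, for every T > 1/(2c), setting ε = 1/(4cT²), every point (x₁, x₂) of the topological boundary of {u > g} with (x₁ + x₂)/√2 ≥ T satisfies 1/(2c) ≤ |x₁ − x₂| ≤ 1/(2(c − ε)), and hence its Euclidean distance to the set {|x₁ − x₂| = 1/(2c)} is at most ε/(2√2·c·(c − ε)). -/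
open Filter

noncomputable def lap {d : ℕ} (φ : EuclideanSpace ℝ (Fin d) → ℝ)
    (x : EuclideanSpace ℝ (Fin d)) : ℝ :=
  ∑ i : Fin d, iteratedFDeriv ℝ 2 φ x ![EuclideanSpace.single i 1, EuclideanSpace.single i 1]

noncomputable def gObst {d : ℕ} (x : EuclideanSpace ℝ (Fin d)) : ℝ :=
  max (⨆ i, x i) 0

def IsVSubsol {d : ℕ} (c : ℝ) (ψ : EuclideanSpace ℝ (Fin d) → ℝ)
    (Ω : Set (EuclideanSpace ℝ (Fin d))) (u : EuclideanSpace ℝ (Fin d) → ℝ) : Prop :=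
  ∀ x₀ ∈ Ω, ψ x₀ < u x₀ →
    ∀ φ : EuclideanSpace ℝ (Fin d) → ℝ, ContDiff ℝ 2 φ → φ x₀ = u x₀ →
      (∀ᶠ x in nhds x₀, u x ≤ φ x) → -(1 / 2 : ℝ) * lap φ x₀ + c ≤ 0

def IsVSupersol {d : ℕ} (c : ℝ) (ψ : EuclideanSpace ℝ (Fin d) → ℝ)
    (Ω : Set (EuclideanSpace ℝ (Fin d))) (u : EuclideanSpace ℝ (Fin d) → ℝ) : Prop :=
  (∀ x ∈ Ω, ψ x ≤ u x) ∧
  ∀ x₀ ∈ Ω, ∀ φ : EuclideanSpace ℝ (Fin d) → ℝ, ContDiff ℝ 2 φ → φ x₀ = u x₀ →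
    (∀ᶠ x in nhds x₀, φ x ≤ u x) → 0 ≤ -(1 / 2 : ℝ) * lap φ x₀ + c

def IsVSol {d : ℕ} (c : ℝ) (ψ : EuclideanSpace ℝ (Fin d) → ℝ)
    (Ω : Set (EuclideanSpace ℝ (Fin d))) (u : EuclideanSpace ℝ (Fin d) → ℝ) : Prop :=
  IsVSubsol c ψ Ω u ∧ IsVSupersol c ψ Ω u

def LinGrowth {d : ℕ} (ψ u : EuclideanSpace ℝ (Fin d) → ℝ) : Prop :=
  (∀ x, ψ x ≤ u x) ∧ ∃ C : ℝ, ∀ x, u x ≤ (∑ i, |x i|) + C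

section quad
variable (a₀ a₁ a₂ a₃ a₄ a₅ : ℝ) (i j : Fin 2)

noncomputable abbrev E2 := EuclideanSpace ℝ (Fin 2)

lemma contCoord (k : Fin 2) : Continuous fun x : E2 => x k :=
  (EuclideanSpace.proj (𝕜 := ℝ) k).continuous

noncomputable def quadF : E2 → ℝ := fun x =>
  a₀ + a₁ * x i + a₂ * x j + a₃ * x i ^ 2 + a₄ * x j ^ 2 + a₅ * (x i * x j)

noncomputable def quadD (x : E2) : E2 →L[ℝ] ℝ :=
  (a₁ + 2*a₃* x i + a₅ * x j) • EuclideanSpace.proj i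
  + (a₂ + 2*a₄* x j + a₅ * x i) • EuclideanSpace.proj j

noncomputable def quadA : E2 →L[ℝ] E2 →L[ℝ] ℝ :=
  (((2*a₃) • (EuclideanSpace.proj i : E2 →L[ℝ] ℝ) + a₅ • (EuclideanSpace.proj j : E2 →L[ℝ] ℝ)).smulRight
    (EuclideanSpace.proj i : E2 →L[ℝ] ℝ))
  + (((2*a₄) • (EuclideanSpace.proj j : E2 →L[ℝ] ℝ) + a₅ • (EuclideanSpace.proj i : E2 →L[ℝ] ℝ)).smulRight
    (EuclideanSpace.proj j : E2 →L[ℝ] ℝ))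

lemma hasFDerivAt_quadF (x : E2) :
    HasFDerivAt (quadF a₀ a₁ a₂ a₃ a₄ a₅ i j) (quadD a₁ a₂ a₃ a₄ a₅ i j x) x := by
  have hi : HasFDerivAt (fun x : E2 => x i) (EuclideanSpace.proj i : E2 →L[ℝ] ℝ) x :=
    PiLp.hasFDerivAt_apply 2 x i
  have hj : HasFDerivAt (fun x : E2 => x j) (EuclideanSpace.proj j : E2 →L[ℝ] ℝ) x :=
    PiLp.hasFDerivAt_apply 2 x j
  have h := (((hi.const_mul a₁).add (hj.const_mul a₂)).add
      (((hi.mul hi).const_mul a₃).add (((hj.mul hj).const_mul a₄)))).add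
      ((hi.mul hj).const_mul a₅)
  have h2 := h.const_add a₀
  refine (h2.congr_fderiv ?_).congr_of_eventuallyEq (Filter.Eventually.of_forall fun y => ?_)
  · ext y; simp [quadD]; ring
  · simp [quadF]; ring

lemma fderiv_quadF :
    (fderiv ℝ (quadF a₀ a₁ a₂ a₃ a₄ a₅ i j)) = fun x =>
      ((a₁ • (EuclideanSpace.proj i : E2 →L[ℝ] ℝ) + a₂ • (EuclideanSpace.proj j : E2 →L[ℝ] ℝ))
        + quadA a₃ a₄ a₅ i j x) := by
  funext x
  rw [(hasFDerivAt_quadF a₀ a₁ a₂ a₃ a₄ a₅ i j x).fderiv]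
  ext y
  simp [quadD, quadA, ContinuousLinearMap.smulRight_apply]
  ring

lemma contDiff_quadF : ContDiff ℝ 2 (quadF a₀ a₁ a₂ a₃ a₄ a₅ i j) := by
  have hi : ContDiff ℝ 2 (fun x : E2 => x i) := by
    have := (EuclideanSpace.proj (𝕜 := ℝ) i).contDiff (n := 2); exact this
  have hj : ContDiff ℝ 2 (fun x : E2 => x j) := by
    have := (EuclideanSpace.proj (𝕜 := ℝ) j).contDiff (n := 2); exact this
  exact (((((contDiff_const.add (contDiff_const.mul hi)).add (contDiff_const.mul hj)).add
    (contDiff_const.mul (hi.pow 2))).add (contDiff_const.mul (hj.pow 2))).add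
    (contDiff_const.mul (hi.mul hj)))

lemma lap_quadF (hij : i ≠ j) (x : E2) :
    lap (quadF a₀ a₁ a₂ a₃ a₄ a₅ i j) x = 2*a₃ + 2*a₄ := by
  have hA : fderiv ℝ (fderiv ℝ (quadF a₀ a₁ a₂ a₃ a₄ a₅ i j)) x = quadA a₃ a₄ a₅ i j := by
    rw [fderiv_quadF]
    exact (((quadA a₃ a₄ a₅ i j).hasFDerivAt (x := x)).const_add _).fderiv
  unfold lap
  rw [Fin.sum_univ_two]
  rw [iteratedFDeriv_two_apply, iteratedFDeriv_two_apply, hA]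
  simp [quadA, ContinuousLinearMap.smulRight_apply, EuclideanSpace.single_apply]
  fin_cases i <;> fin_cases j <;> simp_all <;> ring
end quad

lemma gObst_eq (x : E2) : gObst x = max (max (x 0) (x 1)) 0 := by
  unfold gObst
  congr 1
  apply le_antisymm
  · exact ciSup_le fun i => by fin_cases i <;> simp [le_max_left, le_max_right]
  · apply max_le
    · exact le_ciSup (Set.Finite.bddAbove (Set.finite_range _)) 0
    · exact le_ciSup (Set.Finite.bddAbove (Set.finite_range _)) 1

lemma gObst_cont : Continuous (gObst (d := 2)) := by
  have : (gObst (d := 2)) = fun x => max (max (x 0) (x 1)) 0 := funext gObst_eq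
  rw [this]
  exact ((contCoord 0).max (contCoord 1)).max continuous_const

-- pure arithmetic lemmas
lemma arith_s_plus (s₀ s : ℝ) (hs₀ : 0 < s₀) : 0 ≤ s + (1/(4*s₀))*(s - s₀)^2 := by
  have h : (4*s₀) * (s + (1/(4*s₀))*(s - s₀)^2) = (s+s₀)^2 := by field_simp; ring
  nlinarith [sq_nonneg (s+s₀)]

lemma arith_s_half (s₀ s : ℝ) (hs₀ : 0 < s₀) : 0 ≤ s/2 + (1/(4*s₀))*(s - s₀)^2 := by
  have h : (4*s₀) * (s/2 + (1/(4*s₀))*(s - s₀)^2) = s^2 + s₀^2 := by field_simp; ring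
  nlinarith [sq_nonneg s, sq_nonneg s₀]

lemma arith_abs_coord (a b : ℝ) (h : 0 ≤ a + b) :
    |a| ≤ ((a+b) + |a-b|)/2 ∧ |b| ≤ ((a+b) + |a-b|)/2 := by
  constructor <;> rw [abs_le] <;>
    constructor <;> nlinarith [le_abs_self (a-b), neg_abs_le (a-b)]

lemma tbound (μ t D : ℝ) (hμ : 0 < μ) (hD : 0 ≤ D) (ht : 0 ≤ t)
    (h : μ*t^2 ≤ 8*t + 4*D) : t ≤ max 1 ((8+4*D)/μ) := by
  rcases le_or_gt t 1 with h1 | h1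
  · exact le_trans h1 (le_max_left _ _)
  · refine le_trans ?_ (le_max_right _ _)
    rw [le_div_iff₀ hμ]
    nlinarith

lemma KboundPure (α γ C s₀ p₀ s p : ℝ) (hα : 0 < α) (hγ : 0 < γ) (hp : 0 ≤ p)
    (h : 0 < p + |s| + C - ((p+s)/2 + α*(s-s₀)^2 + γ*(p-p₀)^2)) :
    |s| + p ≤ max 1 ((8 + 4*(max (C + α*s₀^2 + γ*p₀^2) 0))/(min α γ)) := by
  set μ := min α γ with hμdef
  have hμ : 0 < μ := lt_min hα hγ
  set D := max (C + α*s₀^2 + γ*p₀^2) 0 with hDdef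
  have hD : 0 ≤ D := le_max_right _ _
  have hDle : C + α*s₀^2 + γ*p₀^2 ≤ D := le_max_left _ _
  set t := |s| + p with htdef
  have ht : 0 ≤ t := add_nonneg (abs_nonneg s) hp
  apply tbound μ t D hμ hD ht
  have habs : s ≤ |s| ∧ -|s| ≤ s := ⟨le_abs_self s, neg_abs_le s⟩
  have hs2 : s^2 = |s|^2 := (sq_abs s).symm
  have h1 : α*(s-s₀)^2 ≥ μ*s^2/2 - α*s₀^2 := by
    have h2 : μ ≤ α := min_le_left _ _
    nlinarith [sq_nonneg (s - 2*s₀), sq_nonneg s]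
  have h2 : γ*(p-p₀)^2 ≥ μ*p^2/2 - γ*p₀^2 := by
    have h3 : μ ≤ γ := min_le_right _ _
    nlinarith [sq_nonneg (p - 2*p₀), sq_nonneg p]
  have key : μ*(s^2+p^2)/2 < 2*t + D := by nlinarith
  have hsp : t^2 ≤ 2*(s^2 + p^2) := by rw [hs2] at *; nlinarith [sq_nonneg (|s| - p)]
  nlinarith

lemma arith_bdry (s₀ s : ℝ) (hs₀ : 0 < s₀) : |s|/2 ≤ s/2 + (1/(4*s₀))*(s-s₀)^2 := by
  rcases abs_cases s with ⟨h,_⟩|⟨h,_⟩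
  · have h2 : 0 ≤ (1/(4*s₀))*(s-s₀)^2 := by positivity
    linarith
  · have := arith_s_plus s₀ s hs₀; linarith

-- norm bound from coordinate bounds
lemma normBound (x : E2) (R : ℝ) (h0 : |x 0| ≤ R) (h1 : |x 1| ≤ R) : ‖x‖ ≤ 2*R := by
  have hR : 0 ≤ R := le_trans (abs_nonneg _) h0
  rw [EuclideanSpace.norm_eq]
  rw [show (∑ i : Fin 2, ‖x i‖^2) = ‖x 0‖^2 + ‖x 1‖^2 from Fin.sum_univ_two _]
  have : ‖x 0‖^2 + ‖x 1‖^2 ≤ (2*R)^2 := by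
    rw [Real.norm_eq_abs, Real.norm_eq_abs]
    nlinarith [abs_nonneg (x 0), abs_nonneg (x 1)]
  calc √(‖x 0‖^2 + ‖x 1‖^2) ≤ √((2*R)^2) := Real.sqrt_le_sqrt this
    _ = 2*R := Real.sqrt_sq (by positivity)

/-- Lemma A: comparison with the upper barrier. -/
lemma lemA (c : ℝ) (hc : 0 < c) (u : E2 → ℝ) (hucont : Continuous u)
    (hsub : IsVSubsol c gObst Set.univ u) (hg : ∀ x, gObst x ≤ u x)
    (C : ℝ) (hC : ∀ x : E2, u x ≤ (∑ k, |x k|) + C)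
    (hub : ∀ x : E2, u x ≤ max (x 0) 0 + max (x 1) 0 + 1/(4*c))
    (i j : Fin 2) (hij : i ≠ j)
    (s₀ p₀ : ℝ) (hs₀ : 0 < s₀) (hp₀ : 0 < p₀)
    (hsum : 1/s₀ + 1/(c*p₀^2) < 2*c)
    (w : E2) (hw : 0 ≤ w 0 + w 1) :
    u w ≤ w i + (1/(4*s₀)) * (w i - w j - s₀)^2 + (1/(4*c*p₀^2)) * (w i + w j - p₀)^2 := by
  have hperm : ∀ x : E2, x i + x j = x 0 + x 1 ∧ max (x i) (x j) = max (x 0) (x 1) ∧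
      |x i - x j| = |x 0 - x 1| := by
    intro x
    fin_cases i <;> fin_cases j <;> simp_all [max_comm, abs_sub_comm, add_comm]
  set α : ℝ := 1/(4*s₀) with hαdef
  set γ : ℝ := 1/(4*c*p₀^2) with hγdef
  have hα : 0 < α := by rw [hαdef]; positivity
  have hγ : 0 < γ := by rw [hγdef]; positivity
  have hγp₀ : γ * p₀^2 = 1/(4*c) := by rw [hγdef]; field_simp
  set ψ : E2 → ℝ := quadF (α*s₀^2 + γ*p₀^2) (1 - 2*α*s₀ - 2*γ*p₀) (2*α*s₀ - 2*γ*p₀)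
      (α+γ) (α+γ) (-2*α + 2*γ) i j with hψdef
  have hψ : ∀ x : E2, ψ x = x i + α*(x i - x j - s₀)^2 + γ*(x i + x j - p₀)^2 := by
    intro x; simp only [hψdef, quadF]; ring
  have hψcont : Continuous ψ := (contDiff_quadF _ _ _ _ _ _ _ _).continuous
  have hψgObst : ∀ x : E2, 0 ≤ x 0 + x 1 → gObst x ≤ ψ x := by
    intro x hx
    rw [gObst_eq, ← (hperm x).2.1, hψ]
    have e1 := mul_nonneg hα.le (sq_nonneg (x i - x j - s₀))
    have e2 := mul_nonneg hγ.le (sq_nonneg (x i + x j - p₀))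
    apply max_le (max_le (by linarith) ?_) ?_
    · -- x j ≤ ψ x
      have := arith_s_plus s₀ (x i - x j) hs₀
      rw [← hαdef] at this; linarith
    · -- 0 ≤ ψ x
      have hpx : 0 ≤ x i + x j := by rw [(hperm x).1]; exact hx
      have h1 := arith_s_half s₀ (x i - x j) hs₀
      rw [← hαdef] at h1
      have hxi : x i = (x i + x j)/2 + (x i - x j)/2 := by ring
      linarith [hxi ▸ le_refl (x i)]
  have key : ∀ z : E2, 0 ≤ z 0 + z 1 → u z ≤ ψ z := by
    by_contra hcon
    push_neg at hcon
    obtain ⟨z, hz0, hz⟩ := hcon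
    set m : ℝ := u z - ψ z with hm
    have hm0 : 0 < m := by rw [hm]; linarith
    set K : Set E2 := {x | 0 ≤ x 0 + x 1} ∩ {x | m ≤ u x - ψ x} with hKdef
    have hKclosed : IsClosed K := by
      apply IsClosed.inter
      · exact isClosed_le continuous_const ((contCoord 0).add (contCoord 1))
      · exact isClosed_le continuous_const (hucont.sub hψcont)
    set TB : ℝ := max 1 ((8 + 4*(max (C + α*s₀^2 + γ*p₀^2) 0))/(min α γ)) with hTBdef
    have hTB1 : (1:ℝ) ≤ TB := le_max_left _ _
    have hbound : ∀ x ∈ K, |x 0| ≤ TB ∧ |x 1| ≤ TB := by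
      intro x hx
      obtain ⟨hx1, hx2⟩ := hx
      simp only [Set.mem_setOf_eq] at hx1 hx2
      have hpij : x i + x j = x 0 + x 1 := (hperm x).1
      have hsij : |x i - x j| = |x 0 - x 1| := (hperm x).2.2
      have hu : u x ≤ |x 0| + |x 1| + C := by
        have := hC x; rwa [Fin.sum_univ_two] at this
      have habs := arith_abs_coord (x 0) (x 1) hx1
      have hKb : |x i - x j| + (x i + x j) ≤ TB := by
        apply KboundPure α γ C s₀ p₀ (x i - x j) (x i + x j) hα hγ (hpij ▸ hx1)
        have h5 : |x 0| + |x 1| ≤ (x i + x j) + |x i - x j| := by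
          rw [hpij, hsij]; linarith [habs.1, habs.2]
        have h6 : ψ x = ((x i + x j) + (x i - x j))/2 + α*(x i - x j - s₀)^2
            + γ*(x i + x j - p₀)^2 := by rw [hψ x]; ring
        linarith
      have h7 : |x 0| ≤ ((x 0 + x 1) + |x 0 - x 1|)/2 := habs.1
      have h8 : |x 1| ≤ ((x 0 + x 1) + |x 0 - x 1|)/2 := habs.2
      rw [← hpij, ← hsij] at h7 h8
      constructor <;> linarith [abs_nonneg (x i - x j), hpij ▸ hx1]
    have hsubset : K ⊆ Metric.closedBall (0 : E2) (2*TB) := by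
      intro x hx
      rw [Metric.mem_closedBall, dist_zero_right]
      exact normBound x TB (hbound x hx).1 (hbound x hx).2
    have hKcomp : IsCompact K :=
      (isCompact_closedBall (0 : E2) (2*TB)).of_isClosed_subset hKclosed hsubset
    have hKne : K.Nonempty := ⟨z, hz0, le_refl m⟩
    obtain ⟨x₀, hx₀K, hmax⟩ := hKcomp.exists_isMaxOn hKne ((hucont.sub hψcont).continuousOn)
    have hx₀p : 0 ≤ x₀ 0 + x₀ 1 := hx₀K.1
    have hMge : m ≤ u x₀ - ψ x₀ := hx₀K.2
    set M : ℝ := u x₀ - ψ x₀ with hMdef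
    have hglob : ∀ y : E2, 0 ≤ y 0 + y 1 → u y - ψ y ≤ M := by
      intro y hy
      rcases le_or_gt m (u y - ψ y) with h | h
      · exact hmax (⟨hy, h⟩ : y ∈ K)
      · linarith
    rcases eq_or_lt_of_le hx₀p with hbd | hint
    · -- boundary case
      have hx01 : x₀ 1 = - x₀ 0 := by linarith
      have hu0 : u x₀ ≤ |x₀ 0| + 1/(4*c) := by
        have h := hub x₀
        rw [hx01] at h
        rcases le_or_gt 0 (x₀ 0) with h2 | h2
        · rw [abs_of_nonneg h2]
          rw [max_eq_left h2, max_eq_right (by linarith)] at h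
          linarith
        · rw [abs_of_neg h2]
          rw [max_eq_right h2.le, max_eq_left (by linarith)] at h
          linarith
      have hψ0 : |x₀ 0| + 1/(4*c) ≤ ψ x₀ := by
        have hpij : x₀ i + x₀ j = 0 := by rw [(hperm x₀).1]; linarith
        have hs01 : |x₀ i - x₀ j| = 2*|x₀ 0| := by
          rw [(hperm x₀).2.2, hx01, sub_neg_eq_add,
            show x₀ 0 + x₀ 0 = 2*(x₀ 0) by ring, abs_mul, abs_two]
        have hxi : x₀ i = (x₀ i - x₀ j)/2 := by linarith
        have hb := arith_bdry s₀ (x₀ i - x₀ j) hs₀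
        rw [← hαdef] at hb
        have h3 : γ*(x₀ i + x₀ j - p₀)^2 = 1/(4*c) := by
          rw [hpij, show (0:ℝ) - p₀ = -p₀ by ring]
          rw [show γ*(-p₀)^2 = γ*p₀^2 by ring, hγp₀]
        rw [hψ x₀, h3]
        linarith
      linarith
    · -- interior case
      rcases le_or_gt (u x₀) (gObst x₀) with hgu | hgu
      · have := hψgObst x₀ (le_of_lt hint)
        linarith
      · set φ : E2 → ℝ := quadF (α*s₀^2 + γ*p₀^2 + M) (1 - 2*α*s₀ - 2*γ*p₀)
            (2*α*s₀ - 2*γ*p₀) (α+γ) (α+γ) (-2*α + 2*γ) i j with hφdef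
        have hφψ : ∀ x, φ x = ψ x + M := by
          intro x; simp only [hφdef, hψdef, quadF]; ring
        have hφx₀ : φ x₀ = u x₀ := by rw [hφψ, hMdef]; ring
        have hev : ∀ᶠ x in nhds x₀, u x ≤ φ x := by
          have hopen : IsOpen {x : E2 | 0 < x 0 + x 1} :=
            isOpen_lt continuous_const ((contCoord 0).add (contCoord 1))
          filter_upwards [hopen.mem_nhds hint] with y hy
          rw [hφψ]
          linarith [hglob y (le_of_lt hy)]
        have hres := hsub x₀ (Set.mem_univ _) hgu φ
          (contDiff_quadF _ _ _ _ _ _ _ _) hφx₀ hev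
        rw [hφdef, lap_quadF _ _ _ _ _ _ _ _ hij] at hres
        have h4 : 4*α + 4*γ = 1/s₀ + 1/(c*p₀^2) := by
          rw [hαdef, hγdef]; field_simp
        linarith
  have hkey := key w hw
  rw [hψ w] at hkey
  exact hkey

lemma quadF_def (a₀ a₁ a₂ a₃ a₄ a₅ : ℝ) (i j : Fin 2) : quadF a₀ a₁ a₂ a₃ a₄ a₅ i j = fun x =>
  a₀ + a₁ * x i + a₂ * x j + a₃ * x i ^ 2 + a₄ * x j ^ 2 + a₅ * (x i * x j) := rfl

lemma quadW_eq (τ β p₁ : ℝ) (x : E2) :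
    quadF (τ/4 - β*p₁^2) (1/2 + 2*β*p₁) (1/2 + 2*β*p₁)
      (1/(4*τ) - β) (1/(4*τ) - β) (-(1/(2*τ)) - 2*β) 0 1 x
    = (x 0 + x 1)/2 + τ/4 + (1/(4*τ))*(x 0 - x 1)^2 - β*(x 0 + x 1 - p₁)^2 := by
  rw [quadF_def]; ring

lemma quadWM_eq (τ β p₁ M : ℝ) (x : E2) :
    quadF (τ/4 - β*p₁^2 - M) (1/2 + 2*β*p₁) (1/2 + 2*β*p₁)
      (1/(4*τ) - β) (1/(4*τ) - β) (-(1/(2*τ)) - 2*β) 0 1 x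
    = quadF (τ/4 - β*p₁^2) (1/2 + 2*β*p₁) (1/2 + 2*β*p₁)
      (1/(4*τ) - β) (1/(4*τ) - β) (-(1/(2*τ)) - 2*β) 0 1 x - M := by
  rw [quadF_def, quadF_def]; ring

lemma max_half (a b : ℝ) : max a b = ((a+b) + |a-b|)/2 := by
  rcases le_total a b with h | h
  · rw [max_eq_right h, abs_of_nonpos (by linarith)]; ring
  · rw [max_eq_left h, abs_of_nonneg (by linarith)]; ring

lemma arith_W (τ s : ℝ) (hτ : 0 < τ) :
    τ/4 + (1/(4*τ))*s^2 - |s|/2 = (1/(4*τ))*(|s|-τ)^2 := by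
  have h : (|s|-τ)^2 = s^2 - 2*τ*|s| + τ^2 := by rw [sub_sq, sq_abs]; ring
  rw [h]; field_simp; ring

lemma sq_sub_le_sq (a τ : ℝ) (h0 : 0 ≤ a) (h1 : a ≤ τ) : (a - τ)^2 ≤ τ^2 := by nlinarith

lemma le_div_four (β q τ : ℝ) (hβ : 0 < β) (h : β*q ≤ τ/4) : q ≤ τ/(4*β) := by
  rw [le_div_iff₀ (by positivity : (0:ℝ) < 4*β)]; nlinarith

lemma lapval_pure (c τ : ℝ) (hτ : 0 < τ) :
    -(1/2 : ℝ)*(2*(1/(4*τ) - (1/(2*τ) - c)/4) + 2*(1/(4*τ) - (1/(2*τ) - c)/4)) + c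
      = (c - 1/(2*τ))/2 := by
  field_simp; ring

lemma abs_coord_le (a b : ℝ) : |a| ≤ (|a+b| + |a-b|)/2 ∧ |b| ≤ (|a+b| + |a-b|)/2 := by
  constructor <;> rw [abs_le] <;> constructor <;>
    nlinarith [le_abs_self (a+b), neg_abs_le (a+b), le_abs_self (a-b), neg_abs_le (a-b)]

/-- Lemma B: comparison with the lower barrier. -/
lemma lemB (c : ℝ) (hc : 0 < c) (u : E2 → ℝ) (hucont : Continuous u)
    (hsup : IsVSupersol c gObst Set.univ u)
    (w : E2) (hw : 0 ≤ w 0 + w 1) (hws : |w 0 - w 1| < 1/(2*c)) :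
    gObst w < u w := by
  have hg : ∀ x : E2, gObst x ≤ u x := fun x => hsup.1 x (Set.mem_univ _)
  set τ : ℝ := (|w 0 - w 1| + 1/(2*c))/2 with hτdef
  have habsnn := abs_nonneg (w 0 - w 1)
  have hτ0 : 0 < τ := by rw [hτdef]; positivity
  have hτ1 : |w 0 - w 1| < τ := by rw [hτdef]; linarith
  have hτ2 : τ < 1/(2*c) := by rw [hτdef]; linarith
  have h2c : (0:ℝ) < 2*c := by positivity
  have hcτ' : c < 1/(2*τ) := by
    rw [lt_div_iff₀ (by positivity)]
    have := (lt_div_iff₀ h2c).mp hτ2; linarith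
  set p₁ : ℝ := w 0 + w 1 with hp₁def
  set β : ℝ := (1/(2*τ) - c)/4 with hβdef
  have hβ0 : 0 < β := by rw [hβdef]; linarith
  set W : E2 → ℝ := quadF (τ/4 - β*p₁^2) (1/2 + 2*β*p₁) (1/2 + 2*β*p₁)
      (1/(4*τ) - β) (1/(4*τ) - β) (-(1/(2*τ)) - 2*β) 0 1 with hWdef
  have hW : ∀ x : E2, W x = (x 0 + x 1)/2 + τ/4 + (1/(4*τ))*(x 0 - x 1)^2
      - β*(x 0 + x 1 - p₁)^2 := by
    intro x; rw [hWdef]; exact quadW_eq τ β p₁ x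
  have hWcont : Continuous W := (contDiff_quadF _ _ _ _ _ _ _ _).continuous
  have hWg : ∀ x : E2, W x - gObst x ≤ (1/(4*τ))*(|x 0 - x 1| - τ)^2
      - β*(x 0 + x 1 - p₁)^2 := by
    intro x
    have h1 : max (x 0) (x 1) ≤ gObst x := by rw [gObst_eq]; exact le_max_left _ _
    rw [max_half] at h1
    have h2 := arith_W τ (x 0 - x 1) hτ0
    have h3 := hW x
    linarith
  have key : ∀ z : E2, |z 0 - z 1| ≤ τ → W z ≤ u z := by
    by_contra hcon
    push_neg at hcon
    obtain ⟨z, hzs, hz⟩ := hcon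
    set m : ℝ := W z - u z with hm
    have hm0 : 0 < m := by rw [hm]; linarith
    set K : Set E2 := {x | |x 0 - x 1| ≤ τ} ∩ {x | m ≤ W x - u x} with hKdef
    have hKclosed : IsClosed K := by
      apply IsClosed.inter
      · exact isClosed_le ((contCoord 0).sub (contCoord 1)).abs continuous_const
      · exact isClosed_le continuous_const (hWcont.sub hucont)
    set RB : ℝ := (|p₁| + Real.sqrt (τ/(4*β)) + τ)/2 with hRBdef
    have hbound : ∀ x ∈ K, |x 0| ≤ RB ∧ |x 1| ≤ RB := by
      intro x hx
      obtain ⟨hx1, hx2⟩ := hx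
      simp only [Set.mem_setOf_eq] at hx1 hx2
      have h4 := hWg x
      have hgx := hg x
      have h6 : (|x 0 - x 1| - τ)^2 ≤ τ^2 :=
        sq_sub_le_sq _ _ (abs_nonneg _) hx1
      have h7 : (1/(4*τ))*(|x 0 - x 1| - τ)^2 ≤ τ/4 := by
        have h8 : (1/(4*τ))*(|x 0 - x 1| - τ)^2 ≤ (1/(4*τ))*τ^2 :=
          mul_le_mul_of_nonneg_left h6 (by positivity)
        have h9 : (1/(4*τ))*τ^2 = τ/4 := by field_simp
        linarith
      have h14 : β*((x 0 + x 1 - p₁)^2) ≤ τ/4 := by linarith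
      have h10 : (x 0 + x 1 - p₁)^2 ≤ τ/(4*β) := le_div_four β _ τ hβ0 h14
      have h11 : |x 0 + x 1 - p₁| ≤ Real.sqrt (τ/(4*β)) := by
        rw [← Real.sqrt_sq_eq_abs]
        exact Real.sqrt_le_sqrt h10
      have h12 : |x 0 + x 1| ≤ |p₁| + Real.sqrt (τ/(4*β)) := by
        have := abs_sub_abs_le_abs_sub (x 0 + x 1) p₁
        linarith
      have h13 := abs_coord_le (x 0) (x 1)
      exact ⟨by rw [hRBdef]; linarith [h13.1], by rw [hRBdef]; linarith [h13.2]⟩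
    have hsubset : K ⊆ Metric.closedBall (0 : E2) (2*RB) := by
      intro x hx
      rw [Metric.mem_closedBall, dist_zero_right]
      exact normBound x RB (hbound x hx).1 (hbound x hx).2
    have hKcomp : IsCompact K :=
      (isCompact_closedBall (0 : E2) (2*RB)).of_isClosed_subset hKclosed hsubset
    have hKne : K.Nonempty := ⟨z, hzs, le_refl m⟩
    obtain ⟨x₀, hx₀K, hmax⟩ := hKcomp.exists_isMaxOn hKne ((hWcont.sub hucont).continuousOn)
    have hx₀s : |x₀ 0 - x₀ 1| ≤ τ := hx₀K.1
    have hMge : m ≤ W x₀ - u x₀ := hx₀K.2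
    set M : ℝ := W x₀ - u x₀ with hMdef
    have hglob : ∀ y : E2, |y 0 - y 1| ≤ τ → W y - u y ≤ M := by
      intro y hy
      rcases le_or_gt m (W y - u y) with h | h
      · exact hmax (⟨hy, h⟩ : y ∈ K)
      · linarith
    rcases eq_or_lt_of_le hx₀s with hbd | hint
    · -- boundary: |s| = τ, there W ≤ g ≤ u
      have h4 := hWg x₀
      rw [hbd, sub_self] at h4
      norm_num at h4
      have : W x₀ - gObst x₀ ≤ 0 := by
        have := mul_nonneg hβ0.le (sq_nonneg (x₀ 0 + x₀ 1 - p₁)); linarith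
      have := hg x₀
      linarith
    · -- interior: contradiction with supersolution
      set φ : E2 → ℝ := quadF (τ/4 - β*p₁^2 - M) (1/2 + 2*β*p₁) (1/2 + 2*β*p₁)
          (1/(4*τ) - β) (1/(4*τ) - β) (-(1/(2*τ)) - 2*β) 0 1 with hφdef
      have hφW : ∀ x, φ x = W x - M := by
        intro x; rw [hφdef, hWdef]; exact quadWM_eq τ β p₁ M x
      have hφx₀ : φ x₀ = u x₀ := by rw [hφW, hMdef]; ring
      have hev : ∀ᶠ x in nhds x₀, φ x ≤ u x := by
        have hopen : IsOpen {x : E2 | |x 0 - x 1| < τ} :=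
          isOpen_lt ((contCoord 0).sub (contCoord 1)).abs continuous_const
        filter_upwards [hopen.mem_nhds hint] with y hy
        rw [hφW]
        linarith [hglob y (le_of_lt hy)]
      have hres := hsup.2 x₀ (Set.mem_univ _) φ
        (contDiff_quadF _ _ _ _ _ _ _ _) hφx₀ hev
      rw [hφdef, lap_quadF _ _ _ _ _ _ _ _ (by decide) x₀] at hres
      -- hres : 0 ≤ -(1/2)*(2*(1/(4τ)-β) + 2*(1/(4τ)-β)) + c
      rw [hβdef] at hres
      have hτinv : c < 1/(2*τ) := hcτ'
      rw [lapval_pure c τ hτ0] at hres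
      linarith
  -- conclude
  have hkey := key w (le_of_lt hτ1)
  have hgw : gObst w = (w 0 + w 1)/2 + |w 0 - w 1|/2 := by
    rw [gObst_eq, max_half (max (w 0) (w 1)) 0]
    rw [max_half (w 0) (w 1)]
    have h1 : 0 ≤ (w 0 + w 1) + |w 0 - w 1| := by linarith
    rw [abs_of_nonneg (by linarith : (0:ℝ) ≤ ((w 0 + w 1) + |w 0 - w 1|)/2 - 0)]
    ring
  have hWw : W w = (w 0 + w 1)/2 + τ/4 + (1/(4*τ))*(w 0 - w 1)^2 := by
    rw [hW w, ← hp₁def]; ring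
  have harith := arith_W τ (w 0 - w 1) hτ0
  have hpos : 0 < (1/(4*τ))*(|w 0 - w 1| - τ)^2 := by
    have : |w 0 - w 1| - τ ≠ 0 := by linarith
    positivity
  calc gObst w = (w 0 + w 1)/2 + |w 0 - w 1|/2 := hgw
    _ < W w := by rw [hWw]; linarith
    _ ≤ u w := hkey

/-- Specialized form of Lemma A: u x ≤ x i under the closed summed condition. -/
lemma lemA3 (c : ℝ) (hc : 0 < c) (u : E2 → ℝ) (hucont : Continuous u)
    (hsub : IsVSubsol c gObst Set.univ u) (hg : ∀ x, gObst x ≤ u x)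
    (C : ℝ) (hC : ∀ x : E2, u x ≤ (∑ k, |x k|) + C)
    (hub : ∀ x : E2, u x ≤ max (x 0) 0 + max (x 1) 0 + 1/(4*c))
    (i j : Fin 2) (hij : i ≠ j) (x : E2)
    (hp : 0 < x i + x j) (hs : 0 < x i - x j)
    (hsum3 : 1/(x i - x j) + 1/(c*(x i + x j)^2) ≤ 2*c) :
    u x ≤ x i := by
  have hw : 0 ≤ x 0 + x 1 := by
    have : x i + x j = x 0 + x 1 := by
      fin_cases i <;> fin_cases j <;> simp_all [add_comm]
    linarith
  apply le_of_forall_pos_le_add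
  intro e he
  set δ : ℝ := min (x i - x j) (Real.sqrt (4*(x i - x j)*e)) with hδdef
  have hsqpos : (0:ℝ) < 4*(x i - x j)*e := by positivity
  have hδ0 : 0 < δ := lt_min hs (Real.sqrt_pos.mpr hsqpos)
  have hδsq : δ^2 ≤ 4*(x i - x j)*e := by
    calc δ^2 ≤ (Real.sqrt (4*(x i - x j)*e))^2 :=
          pow_le_pow_left₀ hδ0.le (min_le_right _ _) 2
      _ = 4*(x i - x j)*e := Real.sq_sqrt hsqpos.le
  have hsum : 1/(x i - x j + δ) + 1/(c*(x i + x j)^2) < 2*c := by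
    have h1 : 1/(x i - x j + δ) < 1/(x i - x j) :=
      one_div_lt_one_div_of_lt hs (by linarith)
    linarith
  have happ := lemA c hc u hucont hsub hg C hC hub i j hij
    (x i - x j + δ) (x i + x j) (by linarith) hp hsum x hw
  have h2 : x i - x j - (x i - x j + δ) = -δ := by ring
  have h3 : x i + x j - (x i + x j) = 0 := by ring
  rw [h2, h3] at happ
  have h4 : (1/(4*c*(x i + x j)^2)) * (0:ℝ)^2 = 0 := by ring
  have h5 : (1/(4*(x i - x j + δ))) * (-δ)^2 ≤ e := by
    have e1 : (1/(4*(x i - x j + δ))) * (-δ)^2 ≤ (1/(4*(x i - x j))) * δ^2 := by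
      have := one_div_le_one_div_of_le (by positivity : (0:ℝ) < 4*(x i - x j))
        (by linarith : 4*(x i - x j) ≤ 4*(x i - x j + δ))
      have hδ2 : (-δ)^2 = δ^2 := by ring
      rw [hδ2]
      exact mul_le_mul_of_nonneg_right this (sq_nonneg δ)
    have e2 : (1/(4*(x i - x j))) * δ^2 ≤ (1/(4*(x i - x j))) * (4*(x i - x j)*e) :=
      mul_le_mul_of_nonneg_left hδsq (by positivity)
    have e3 : (1/(4*(x i - x j))) * (4*(x i - x j)*e) = e := by
      field_simp
    linarith
  linarith

lemma sqrt_ineq (c ε P : ℝ) (hc : 0 < c) (hε : 0 < ε)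
    (h : 1/(2*Real.sqrt (c*ε)) * Real.sqrt 2 ≤ P) : 0 < P ∧ 1/(c*P^2) ≤ 2*ε := by
  have hcε : 0 < c*ε := mul_pos hc hε
  have h1 : 0 < Real.sqrt (c*ε) := Real.sqrt_pos.mpr hcε
  have h2 : (0:ℝ) < Real.sqrt 2 := Real.sqrt_pos.mpr (by norm_num)
  have hP : 0 < P := lt_of_lt_of_le (by positivity) h
  refine ⟨hP, ?_⟩
  have h3 : (1/(2*Real.sqrt (c*ε)) * Real.sqrt 2)^2 = 1/(2*(c*ε)) := by
    rw [mul_pow, div_pow, one_pow, mul_pow, Real.sq_sqrt hcε.le,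
      Real.sq_sqrt (by norm_num : (0:ℝ) ≤ 2)]
    ring
  have h4 : 1/(2*(c*ε)) ≤ P^2 := by
    rw [← h3]; exact pow_le_pow_left₀ (by positivity) h 2
  have h5 : 1/(2*ε) ≤ c*P^2 := by
    calc 1/(2*ε) = c*(1/(2*(c*ε))) := by field_simp
      _ ≤ c*P^2 := mul_le_mul_of_nonneg_left h4 hc.le
  calc 1/(c*P^2) ≤ 1/(1/(2*ε)) := one_div_le_one_div_of_le (by positivity) h5
    _ = 2*ε := one_div_one_div _

lemma recip_flip (A s : ℝ) (hA : 0 < A) (h : 1/(2*A) ≤ s) : 0 < s ∧ 1/s ≤ 2*A := by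
  have hs : 0 < s := lt_of_lt_of_le (by positivity) h
  refine ⟨hs, ?_⟩
  rw [div_le_iff₀ hs]
  rw [div_le_iff₀ (by positivity : (0:ℝ) < 2*A)] at h
  nlinarith

/-- Part (i), packaged. -/
lemma partI (c : ℝ) (hc : 0 < c) (u : E2 → ℝ) (hucont : Continuous u)
    (hsub : IsVSubsol c gObst Set.univ u) (hg : ∀ x, gObst x ≤ u x)
    (C : ℝ) (hC : ∀ x : E2, u x ≤ (∑ k, |x k|) + C)
    (hub : ∀ x : E2, u x ≤ max (x 0) 0 + max (x 1) 0 + 1/(4*c)) :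
    ∀ ε ∈ Set.Ioo (0:ℝ) c, ∀ x : E2,
      1/(2*Real.sqrt (c*ε)) ≤ (x 0 + x 1)/Real.sqrt 2 →
      1/(2*(c-ε)) ≤ |x 0 - x 1| → u x = gObst x := by
  intro ε hε x hp hs
  obtain ⟨hε0, hεc⟩ := hε
  have h2 : (0:ℝ) < Real.sqrt 2 := Real.sqrt_pos.mpr (by norm_num)
  have hp' : 1/(2*Real.sqrt (c*ε)) * Real.sqrt 2 ≤ x 0 + x 1 := (le_div_iff₀ h2).mp hp
  obtain ⟨hP, hPsq⟩ := sqrt_ineq c ε (x 0 + x 1) hc hε0 hp'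
  obtain ⟨hS, hSrec⟩ := recip_flip (c - ε) (|x 0 - x 1|) (by linarith) hs
  rcases le_or_gt (x 1) (x 0) with h01 | h01
  · have habs : |x 0 - x 1| = x 0 - x 1 := abs_of_nonneg (by linarith)
    rw [habs] at hS hSrec
    have hle : u x ≤ x 0 := by
      apply lemA3 c hc u hucont hsub hg C hC hub 0 1 (by decide) x hP hS
      linarith
    have hgx : gObst x = x 0 := by
      rw [gObst_eq, max_eq_left h01, max_eq_left (by linarith : (0:ℝ) ≤ x 0)]
    rw [hgx]
    exact le_antisymm hle (hgx ▸ hg x)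
  · have habs : |x 0 - x 1| = x 1 - x 0 := by
      rw [abs_sub_comm]; exact abs_of_nonneg (by linarith)
    rw [habs] at hS hSrec
    have hP' : 0 < x 1 + x 0 := by linarith
    have hle : u x ≤ x 1 := by
      apply lemA3 c hc u hucont hsub hg C hC hub 1 0 (by decide) x hP' hS
      have : x 1 + x 0 = x 0 + x 1 := by ring
      rw [this]
      linarith
    have hgx : gObst x = x 1 := by
      rw [gObst_eq, max_eq_right h01.le, max_eq_left (by linarith : (0:ℝ) ≤ x 1)]
    rw [hgx]
    exact le_antisymm hle (hgx ▸ hg x)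

lemma hBid_pure (e c d s : ℝ) : e/(2*s*c*d) = (e/(2*c*d))/s := by
  rw [div_div]; congr 1; ring

lemma distBound (x y : E2) (ρ B : ℝ) (hρ : 0 ≤ ρ) (hB : ρ/Real.sqrt 2 ≤ B)
    (hy0 : dist (x 0) (y 0) = ρ/2) (hy1 : dist (x 1) (y 1) = ρ/2) : dist x y ≤ B := by
  rw [EuclideanSpace.dist_eq, Fin.sum_univ_two, hy0, hy1]
  have h1 : (ρ/2)^2 + (ρ/2)^2 = (ρ/Real.sqrt 2)^2 := by
    rw [div_pow ρ (Real.sqrt 2), Real.sq_sqrt (by norm_num : (0:ℝ) ≤ 2)]; ring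
  rw [h1, Real.sqrt_sq (by positivity)]
  exact hB

/-- Asymptotic localization of the free boundary in dimension two. -/
theorem asymptotic_localization_free_boundary (c : ℝ) (hc : 0 < c)
    (u : EuclideanSpace ℝ (Fin 2) → ℝ) (hucont : Continuous u)
    (hu : IsVSol c gObst Set.univ u) (hgrowth : LinGrowth gObst u)
    (hub : ∀ x : EuclideanSpace ℝ (Fin 2),
      u x ≤ max (x 0) 0 + max (x 1) 0 + 1 / (4 * c)) :
    (∀ ε ∈ Set.Ioo (0 : ℝ) c, ∀ x : EuclideanSpace ℝ (Fin 2),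
        1 / (2 * Real.sqrt (c * ε)) ≤ (x 0 + x 1) / Real.sqrt 2 →
        1 / (2 * (c - ε)) ≤ |x 0 - x 1| → u x = gObst x) ∧
    (∀ x : EuclideanSpace ℝ (Fin 2),
        0 ≤ x 0 + x 1 → |x 0 - x 1| < 1 / (2 * c) → gObst x < u x) ∧
    (∀ T : ℝ, 1 / (2 * c) < T →
      ∀ x ∈ frontier {y : EuclideanSpace ℝ (Fin 2) | gObst y < u y},
        T ≤ (x 0 + x 1) / Real.sqrt 2 →
          (1 / (2 * c) ≤ |x 0 - x 1| ∧
            |x 0 - x 1| ≤ 1 / (2 * (c - 1 / (4 * c * T ^ 2)))) ∧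
          Metric.infDist x {y : EuclideanSpace ℝ (Fin 2) | |y 0 - y 1| = 1 / (2 * c)} ≤
            (1 / (4 * c * T ^ 2)) /
              (2 * Real.sqrt 2 * c * (c - 1 / (4 * c * T ^ 2)))) := by
  obtain ⟨hsub, hsup⟩ := hu
  obtain ⟨hg, C, hC⟩ := hgrowth
  have parti := partI c hc u hucont hsub hg C hC hub
  have partii : ∀ x : E2, 0 ≤ x 0 + x 1 → |x 0 - x 1| < 1/(2*c) → gObst x < u x :=
    fun x h1 h2 => lemB c hc u hucont hsup x h1 h2
  refine ⟨parti, partii, ?_⟩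
  intro T hT x hx hxp
  obtain ⟨hxc, hxi⟩ := hx
  set ε : ℝ := 1/(4*c*T^2) with hεdef
  have hT0 : 0 < T := lt_trans (by positivity) hT
  have hε0 : 0 < ε := by rw [hεdef]; positivity
  have hεc : ε < c := by
    rw [hεdef, div_lt_iff₀ (by positivity)]
    rw [div_lt_iff₀ (by positivity : (0:ℝ) < 2*c)] at hT
    nlinarith
  have hcε : 0 < c - ε := by linarith
  have h2 : (0:ℝ) < Real.sqrt 2 := Real.sqrt_pos.mpr (by norm_num)
  have hp0 : 0 < x 0 + x 1 := by
    have h3 := (le_div_iff₀ h2).mp hxp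
    nlinarith
  -- (a)
  have haS : 1/(2*c) ≤ |x 0 - x 1| := by
    by_contra hlt
    push_neg at hlt
    have hWopen : IsOpen {y : E2 | 0 < y 0 + y 1 ∧ |y 0 - y 1| < 1/(2*c)} :=
      (isOpen_lt continuous_const ((contCoord 0).add (contCoord 1))).inter
        (isOpen_lt ((contCoord 0).sub (contCoord 1)).abs continuous_const)
    have hxW : x ∈ {y : E2 | 0 < y 0 + y 1 ∧ |y 0 - y 1| < 1/(2*c)} := ⟨hp0, hlt⟩
    have hWS : {y : E2 | 0 < y 0 + y 1 ∧ |y 0 - y 1| < 1/(2*c)} ⊆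
        {y : E2 | gObst y < u y} := fun y hy => partii y hy.1.le hy.2
    exact hxi (mem_interior_iff_mem_nhds.mpr
      (Filter.mem_of_superset (hWopen.mem_nhds hxW) hWS))
  have hsqval : Real.sqrt (c*ε) = 1/(2*T) := by
    have h1 : c*ε = (1/(2*T))^2 := by rw [hεdef]; field_simp; ring
    rw [h1, Real.sqrt_sq (by positivity)]
  -- (b)
  have hbS : |x 0 - x 1| ≤ 1/(2*(c-ε)) := by
    by_contra hgt
    push_neg at hgt
    have hS'0 : 0 < |x 0 - x 1| := lt_trans (by positivity) hgt
    have h3 : 1/(2*|x 0 - x 1|) < c - ε := by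
      rw [div_lt_iff₀ (by positivity)]
      rw [div_lt_iff₀ (by positivity : (0:ℝ) < 2*(c-ε))] at hgt
      nlinarith
    set ε2 : ℝ := (ε + (c - 1/(2*|x 0 - x 1|)))/2 with hε2def
    have hε2a : ε < ε2 := by rw [hε2def]; linarith
    have hε2b : ε2 < c - 1/(2*|x 0 - x 1|) := by rw [hε2def]; linarith
    have hpos' : 0 < 1/(2*|x 0 - x 1|) := by positivity
    have hε2c : ε2 < c := by linarith
    have hε20 : 0 < ε2 := lt_trans hε0 hε2a
    have hsq2 : Real.sqrt (c*ε) < Real.sqrt (c*ε2) :=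
      Real.sqrt_lt_sqrt (by positivity) (by nlinarith)
    have hsq2pos : 0 < Real.sqrt (c*ε2) := Real.sqrt_pos.mpr (by positivity)
    have hT2 : 1/(2*Real.sqrt (c*ε2)) < T := by
      have h5 : 1/(2*T) < Real.sqrt (c*ε2) := by rw [← hsqval]; exact hsq2
      rw [div_lt_iff₀ (by positivity : (0:ℝ) < 2*Real.sqrt (c*ε2))]
      rw [div_lt_iff₀ (by positivity : (0:ℝ) < 2*T)] at h5
      nlinarith
    have hsx : 1/(2*(c-ε2)) < |x 0 - x 1| := by
      have h7 : 1/(2*|x 0 - x 1|) < c - ε2 := by linarith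
      have h8 : 0 < c - ε2 := by linarith
      rw [div_lt_iff₀ (by positivity : (0:ℝ) < 2*(c-ε2))]
      rw [div_lt_iff₀ (by positivity : (0:ℝ) < 2*|x 0 - x 1|)] at h7
      nlinarith
    have hUopen : IsOpen {y : E2 | 1/(2*Real.sqrt (c*ε2)) < (y 0 + y 1)/Real.sqrt 2 ∧
        1/(2*(c-ε2)) < |y 0 - y 1|} :=
      (isOpen_lt continuous_const (((contCoord 0).add (contCoord 1)).div_const _)).inter
        (isOpen_lt continuous_const ((contCoord 0).sub (contCoord 1)).abs)
    have hxU : x ∈ {y : E2 | 1/(2*Real.sqrt (c*ε2)) < (y 0 + y 1)/Real.sqrt 2 ∧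
        1/(2*(c-ε2)) < |y 0 - y 1|} := ⟨lt_of_lt_of_le hT2 hxp, hsx⟩
    obtain ⟨y, hyU, hyS⟩ := mem_closure_iff.mp hxc _ hUopen hxU
    have heq := parti ε2 ⟨hε20, hε2c⟩ y (le_of_lt hyU.1) (le_of_lt hyU.2)
    have hlt2 : gObst y < u y := hyS
    linarith [heq.le, heq.ge]
  refine ⟨⟨haS, hbS⟩, ?_⟩
  -- (c)
  set ρ : ℝ := |x 0 - x 1| - 1/(2*c) with hρdef
  have hρ0 : 0 ≤ ρ := by rw [hρdef]; linarith
  have hρle : ρ ≤ ε/(2*c*(c-ε)) := by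
    have hid : 1/(2*(c-ε)) - 1/(2*c) = ε/(2*c*(c-ε)) := by field_simp; ring
    rw [hρdef]; linarith
  have hBid : ε/(2*Real.sqrt 2*c*(c-ε)) = (ε/(2*c*(c-ε)))/Real.sqrt 2 :=
    hBid_pure ε c (c-ε) (Real.sqrt 2)
  have hBfin : ρ/Real.sqrt 2 ≤ ε/(2*Real.sqrt 2*c*(c-ε)) := by
    rw [hBid]
    gcongr
  rcases le_or_gt 0 (x 0 - x 1) with hsgn | hsgn
  · set y : E2 := (WithLp.equiv 2 (Fin 2 → ℝ)).symm ![x 0 - ρ/2, x 1 + ρ/2] with hydef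
    have hy0 : y 0 = x 0 - ρ/2 := by rw [hydef]; simp
    have hy1 : y 1 = x 1 + ρ/2 := by rw [hydef]; simp
    have habs : |x 0 - x 1| = x 0 - x 1 := abs_of_nonneg hsgn
    have hyZ : y ∈ {y : E2 | |y 0 - y 1| = 1/(2*c)} := by
      have h9 : y 0 - y 1 = 1/(2*c) := by rw [hy0, hy1, hρdef, habs]; ring
      simp only [Set.mem_setOf_eq, h9]
      exact abs_of_nonneg (by positivity)
    calc Metric.infDist x {y : E2 | |y 0 - y 1| = 1/(2*c)} ≤ dist x y :=
          Metric.infDist_le_dist_of_mem hyZ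
      _ ≤ ε/(2*Real.sqrt 2*c*(c-ε)) := by
          apply distBound x y ρ _ hρ0 hBfin
          · rw [hy0, Real.dist_eq, abs_of_nonneg (by linarith : (0:ℝ) ≤ x 0 - (x 0 - ρ/2))]
            ring_nf
          · rw [hy1, Real.dist_eq, abs_of_nonpos (by linarith : x 1 - (x 1 + ρ/2) ≤ 0)]
            ring_nf
  · set y : E2 := (WithLp.equiv 2 (Fin 2 → ℝ)).symm ![x 0 + ρ/2, x 1 - ρ/2] with hydef
    have hy0 : y 0 = x 0 + ρ/2 := by rw [hydef]; simp
    have hy1 : y 1 = x 1 - ρ/2 := by rw [hydef]; simp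
    have habs : |x 0 - x 1| = -(x 0 - x 1) := abs_of_neg hsgn
    have hyZ : y ∈ {y : E2 | |y 0 - y 1| = 1/(2*c)} := by
      have h9 : y 0 - y 1 = -(1/(2*c)) := by rw [hy0, hy1, hρdef, habs]; ring
      simp only [Set.mem_setOf_eq, h9, abs_neg]
      exact abs_of_nonneg (by positivity)
    calc Metric.infDist x {y : E2 | |y 0 - y 1| = 1/(2*c)} ≤ dist x y :=
          Metric.infDist_le_dist_of_mem hyZ
      _ ≤ ε/(2*Real.sqrt 2*c*(c-ε)) := by
          apply distBound x y ρ _ hρ0 hBfin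
          · rw [hy0, Real.dist_eq, abs_of_nonpos (by linarith : x 0 - (x 0 + ρ/2) ≤ 0)]
            ring_nf
          · rw [hy1, Real.dist_eq, abs_of_nonneg (by linarith : (0:ℝ) ≤ x 1 - (x 1 - ρ/2))]
            ring_nf
end

section
/- Contact region in the positive orthant (upper bound of the free boundary in general dimension): There exists a universal constant γ > 1, independent of d and c, such that for every integer d ≥ 2, every c > 0, and every viscosity solution u of min{−(1/2)Δu + c, u − g} = 0 on ℝ^d with at most linear growth, one has u(x) = g(x) for every x in the set N(γd/c) := {x ∈ ℝ^d : xᵢ ≥ 0 for all i, and |xᵢ − x_j| ≥ γd/c for all i ≠ j}. -/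
open Filter MeasureTheory

def NSet (d : ℕ) (γ' : ℝ) : Set (EuclideanSpace ℝ (Fin d)) :=
  {x | (∀ i, 0 ≤ x i) ∧ ∀ i j, i ≠ j → γ' ≤ |x i - x j|}

open scoped RealInnerProductSpace

section Aux
variable {d : ℕ}

lemma quad_hasFDerivAt (a : ℝ) (B : EuclideanSpace ℝ (Fin d) →L[ℝ] ℝ) (K : ℝ)
    (y : EuclideanSpace ℝ (Fin d)) :
    HasFDerivAt (fun x : EuclideanSpace ℝ (Fin d) => B x + a * ⟪x, x⟫ + K)
      (B + (2 * a) • innerSL ℝ y) y := by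
  have h1 := ((hasFDerivAt_id (𝕜 := ℝ) y).inner ℝ (hasFDerivAt_id y)).const_mul a
  have h3 := ((B.hasFDerivAt (x := y)).add h1).add_const K
  refine h3.congr_fderiv ?_
  ext v
  simp [fderivInnerCLM_apply, real_inner_comm]
  have : ∑ x : Fin d, v x * y x = ∑ x : Fin d, y x * v x :=
    Finset.sum_congr rfl fun i _ => mul_comm _ _
  ring

lemma quad_fderiv2 (a : ℝ) (B : EuclideanSpace ℝ (Fin d) →L[ℝ] ℝ) (K : ℝ)
    (x : EuclideanSpace ℝ (Fin d)) :
    fderiv ℝ (fderiv ℝ (fun x : EuclideanSpace ℝ (Fin d) => B x + a * ⟪x, x⟫ + K)) x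
      = (2 * a) • (innerSL ℝ : EuclideanSpace ℝ (Fin d) →L[ℝ] _) := by
  have hf : fderiv ℝ (fun x : EuclideanSpace ℝ (Fin d) => B x + a * ⟪x, x⟫ + K)
      = fun y => B + (2 * a) • innerSL ℝ y := funext fun y => (quad_hasFDerivAt a B K y).fderiv
  rw [hf]
  have h : HasFDerivAt (fun y : EuclideanSpace ℝ (Fin d) => B + (2 * a) • innerSL ℝ y)
      ((2 * a) • (innerSL ℝ : EuclideanSpace ℝ (Fin d) →L[ℝ] _)) x := by
    have h2 := (((2 * a) • (innerSL ℝ : EuclideanSpace ℝ (Fin d) →L[ℝ] _)).hasFDerivAt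
      (x := x)).const_add B
    exact h2
  exact h.fderiv

lemma quad_lap (a : ℝ) (B : EuclideanSpace ℝ (Fin d) →L[ℝ] ℝ) (K : ℝ)
    (x : EuclideanSpace ℝ (Fin d)) :
    lap (fun x : EuclideanSpace ℝ (Fin d) => B x + a * ⟪x, x⟫ + K) x = 2 * a * d := by
  unfold lap
  have h : ∀ i : Fin d, iteratedFDeriv ℝ 2
      (fun x : EuclideanSpace ℝ (Fin d) => B x + a * ⟪x, x⟫ + K) x
      ![EuclideanSpace.single i 1, EuclideanSpace.single i 1] = 2 * a := by
    intro i
    rw [iteratedFDeriv_two_apply, quad_fderiv2]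
    simp [EuclideanSpace.inner_single_left]
    change 2 * a * ⟪EuclideanSpace.single i 1, EuclideanSpace.single i (1:ℝ)⟫ = 2 * a
    simp
  simp only [h, Finset.sum_const, Finset.card_univ, Fintype.card_fin, nsmul_eq_mul]
  ring

lemma abs_coord_le_norm (z : EuclideanSpace ℝ (Fin d)) (i : Fin d) : |z i| ≤ ‖z‖ := by
  rw [EuclideanSpace.norm_eq]
  have h1 : |z i| = Real.sqrt (‖z i‖ ^ 2) := by
    rw [Real.norm_eq_abs, Real.sqrt_sq_eq_abs, abs_abs]
  rw [h1]
  exact Real.sqrt_le_sqrt (Finset.single_le_sum (fun j _ => sq_nonneg ‖z j‖)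
    (Finset.mem_univ i))

lemma quad_contDiff (a : ℝ) (B : EuclideanSpace ℝ (Fin d) →L[ℝ] ℝ) (K : ℝ) :
    ContDiff ℝ 2 (fun x : EuclideanSpace ℝ (Fin d) => B x + a * ⟪x, x⟫ + K) :=
  ((B.contDiff.add (contDiff_const.mul (contDiff_id.inner ℝ contDiff_id))).add contDiff_const)

end Aux

set_option maxHeartbeats 1000000 in
/-- Contact region in the positive orthant: upper bound of the free
boundary in general dimension. -/
theorem contact_region_positive_orthant :
    ∃ γ : ℝ, 1 < γ ∧ ∀ d : ℕ, 2 ≤ d → ∀ c : ℝ, 0 < c →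
      ∀ u : EuclideanSpace ℝ (Fin d) → ℝ, Continuous u →
        IsVSol c gObst Set.univ u → LinGrowth gObst u →
          ∀ x ∈ NSet d (γ * d / c), u x = gObst x := by
  refine ⟨2, one_lt_two, ?_⟩
  intro d hd c hc u hu hsol hlin x₀ hx₀
  obtain ⟨hsub, _⟩ := hsol
  obtain ⟨hg_le, C, hC⟩ := hlin
  obtain ⟨hpos, hgap⟩ := hx₀
  have hdpos : (0:ℝ) < d := by
    have : (2:ℝ) ≤ d := by exact_mod_cast hd
    linarith
  set γ' : ℝ := 2 * d / c with hγ'def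
  have hγ'pos : 0 < γ' := by positivity
  have : Nonempty (Fin d) := ⟨⟨0, by omega⟩⟩
  obtain ⟨i₀, hi₀⟩ := Finite.exists_max (fun i => x₀ i)
  have hsup_eq : (⨆ i, x₀ i) = x₀ i₀ :=
    le_antisymm (ciSup_le hi₀) (le_ciSup (Set.Finite.bddAbove (Set.finite_range _)) i₀)
  have hg0 : gObst x₀ = x₀ i₀ := by rw [gObst, hsup_eq, max_eq_left (hpos i₀)]
  have hgapc : ∀ j, j ≠ i₀ → x₀ j ≤ x₀ i₀ - γ' := by
    intro j hj
    have h1 := hgap i₀ j (Ne.symm hj)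
    rw [abs_of_nonneg (by linarith [hi₀ j])] at h1
    linarith
  have hmax_big : γ' ≤ x₀ i₀ := by
    have : Nontrivial (Fin d) := Fin.nontrivial_iff_two_le.mpr hd
    obtain ⟨j, hj⟩ := exists_ne i₀
    have := hgapc j hj
    have := hpos j
    linarith
  set a : ℝ := 3 * c / (4 * d) with hadef
  have hapos : 0 < a := by positivity
  have haγ : a * γ' = 3 / 2 := by
    rw [hadef, hγ'def]; field_simp; ring
  have had : a * d = 3 * c / 4 := by
    rw [hadef]; field_simp
  have key1 : ∀ ρ : ℝ, 0 ≤ ρ → 2 * ρ - γ' ≤ a * ρ ^ 2 := by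
    intro ρ hρ
    nlinarith [sq_nonneg (a * ρ - 1), hapos, haγ]
  have key2 : ∀ ρ : ℝ, 0 ≤ ρ → ρ - γ' ≤ a * ρ ^ 2 := by
    intro ρ hρ
    nlinarith [sq_nonneg (2 * a * ρ - 1), hapos, haγ]
  have main : ∀ ε : ℝ, 0 < ε → u x₀ ≤ gObst x₀ + ε := by
    intro ε hε
    set B : EuclideanSpace ℝ (Fin d) →L[ℝ] ℝ :=
      EuclideanSpace.proj i₀ - (2 * a) • innerSL ℝ x₀ with hBdef
    set K : ℝ := a * ⟪x₀, x₀⟫ + ε with hKdef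
    set w : EuclideanSpace ℝ (Fin d) → ℝ := fun x => B x + a * ⟪x, x⟫ + K with hwdef
    have hwx : ∀ x, w x = x i₀ + a * ‖x - x₀‖ ^ 2 + ε := by
      intro x
      have h2 : ‖x - x₀‖ ^ 2 = ⟪x - x₀, x - x₀⟫ := (real_inner_self_eq_norm_sq _).symm
      rw [hwdef]
      simp only [hBdef, hKdef, ContinuousLinearMap.sub_apply, ContinuousLinearMap.smul_apply,
        innerSL_apply_apply, smul_eq_mul, h2, real_inner_sub_sub_self]
      rw [real_inner_comm x₀ x]
      have hproj : (EuclideanSpace.proj i₀ : EuclideanSpace ℝ (Fin d) →L[ℝ] ℝ) x = x i₀ := rfl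
      rw [hproj]
      ring
    have hcoord : ∀ (x : EuclideanSpace ℝ (Fin d)) j, |x j - x₀ j| ≤ ‖x - x₀‖ := by
      intro x j
      have := abs_coord_le_norm (x - x₀) j
      simpa using this
    have hwg : ∀ x, gObst x ≤ w x := by
      intro x
      set ρ := ‖x - x₀‖ with hρdef
      have hρ0 : (0:ℝ) ≤ ρ := norm_nonneg _
      have hwx' := hwx x
      rw [← hρdef] at hwx'
      have h3 : x₀ i₀ - ρ ≤ x i₀ := by
        have := hcoord x i₀
        have := abs_le.mp this
        linarith [this.1]
      rw [gObst]
      apply max_le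
      · apply ciSup_le
        intro j
        by_cases hj : j = i₀
        · subst hj
          rw [hwx']
          nlinarith [sq_nonneg ρ, hapos, hε, mul_nonneg hapos.le (sq_nonneg ρ)]
        · have h1 : x j ≤ x₀ j + ρ := by
            have := abs_le.mp (hcoord x j)
            linarith [this.2]
          have h2 := hgapc j hj
          rw [hwx']
          have := key1 ρ hρ0
          linarith
      · rw [hwx']
        have := key2 ρ hρ0
        linarith
    set S : ℝ := (∑ i, |x₀ i|) + C - x₀ i₀ with hSdef
    set R : ℝ := max 1 ((d + 1 + |S|) / a) with hRdef
    have hR1 : (1:ℝ) ≤ R := le_max_left _ _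
    have hRpos : (0:ℝ) < R := lt_of_lt_of_le one_pos hR1
    have hRa : (d:ℝ) + 1 + |S| ≤ a * R := by
      have h := le_max_right 1 ((d + 1 + |S|) / a)
      rw [div_le_iff₀ hapos] at h
      calc (d:ℝ) + 1 + |S| ≤ R * a := h
        _ = a * R := mul_comm _ _
    have hbdry : ∀ x : EuclideanSpace ℝ (Fin d), ‖x - x₀‖ = R → u x ≤ w x := by
      intro x hx
      have h1 : u x ≤ (∑ i, |x i|) + C := hC x
      have h3 : (∑ i, |x i|) ≤ (∑ i, |x₀ i|) + d * R := by
        have h2 : ∀ i : Fin d, |x i| ≤ |x₀ i| + R := by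
          intro i
          have hc1 : |x i - x₀ i| ≤ R := by rw [← hx]; exact hcoord x i
          have : |x i| ≤ |x₀ i| + |x i - x₀ i| := by
            calc |x i| = |x₀ i + (x i - x₀ i)| := by ring_nf
              _ ≤ |x₀ i| + |x i - x₀ i| := abs_add_le _ _
          linarith
        calc (∑ i, |x i|) ≤ ∑ i : Fin d, (|x₀ i| + R) := Finset.sum_le_sum fun i _ => h2 i
          _ = (∑ i, |x₀ i|) + d * R := by
            rw [Finset.sum_add_distrib, Finset.sum_const, Finset.card_univ, Fintype.card_fin,
              nsmul_eq_mul]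
      have h4 : x₀ i₀ - R ≤ x i₀ := by
        have hc1 : |x i₀ - x₀ i₀| ≤ R := by rw [← hx]; exact hcoord x i₀
        have := abs_le.mp hc1
        linarith [this.1]
      rw [hwx x, hx]
      have hSS : S ≤ |S| := le_abs_self S
      have habs : (0:ℝ) ≤ |S| := abs_nonneg S
      nlinarith [mul_le_mul_of_nonneg_right hRa hRpos.le,
        mul_le_mul_of_nonneg_left hR1 habs]
    have hwcont : Continuous w := (quad_contDiff a B K).continuous
    obtain ⟨xs, hxs_mem, hxs_max⟩ := (isCompact_closedBall x₀ R).exists_isMaxOn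
      ⟨x₀, Metric.mem_closedBall_self hRpos.le⟩ ((hu.sub hwcont).continuousOn)
    set M : ℝ := u xs - w xs with hMdef
    by_cases hM : M ≤ 0
    · have hx₀mem : x₀ ∈ Metric.closedBall x₀ R := Metric.mem_closedBall_self hRpos.le
      have hmax := hxs_max hx₀mem
      simp only [Set.mem_setOf_eq] at hmax
      have hw0 : w x₀ = gObst x₀ + ε := by
        rw [hwx x₀, hg0]; simp
      have : u x₀ - w x₀ ≤ M := hmax
      linarith
    · push_neg at hM
      exfalso
      have hlt : ‖xs - x₀‖ < R := by
        have hd1 : ‖xs - x₀‖ ≤ R := by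
          rw [← dist_eq_norm]; exact Metric.mem_closedBall.mp hxs_mem
        rcases lt_or_eq_of_le hd1 with h | h
        · exact h
        · exact absurd (hbdry xs h) (by rw [hMdef] at hM; linarith)
      have hgxs : gObst xs < u xs := lt_of_le_of_lt (hwg xs) (by rw [hMdef] at hM; linarith)
      set φ : EuclideanSpace ℝ (Fin d) → ℝ := fun x => B x + a * ⟪x, x⟫ + (K + M) with hφdef
      have hφw : ∀ x, φ x = w x + M := by intro x; rw [hφdef, hwdef]; ring
      have hφcd : ContDiff ℝ 2 φ := quad_contDiff a B (K + M)
      have hφxs : φ xs = u xs := by rw [hφw, hMdef]; ring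
      have hev : ∀ᶠ x in nhds xs, u x ≤ φ x := by
        have hball : Metric.ball x₀ R ∈ nhds xs :=
          Metric.isOpen_ball.mem_nhds (by rw [Metric.mem_ball, dist_eq_norm]; exact hlt)
        filter_upwards [hball] with x hx
        have hxmem : x ∈ Metric.closedBall x₀ R := Metric.ball_subset_closedBall hx
        have := hxs_max hxmem
        simp only [Set.mem_setOf_eq, Pi.sub_apply] at this
        rw [hφw]
        linarith [this]
      have hfin := hsub xs (Set.mem_univ _) hgxs φ hφcd hφxs hev
      rw [hφdef, quad_lap] at hfin
      nlinarith [had]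
  have h1 : u x₀ ≤ gObst x₀ := by
    by_contra h
    push_neg at h
    have := main ((u x₀ - gObst x₀) / 2) (by linarith)
    linarith
  exact le_antisymm h1 (hg_le x₀)
end
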